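/- Let d ≥ 4 be an integer and let s : [0,∞) → [0,∞) be twice differentiable, nonnegative, and concave (hence nondecreasing). Then the function g : ℝ^d \ {0} → ℝ defined by g(x) = s(‖x‖²)/‖x‖² is superharmonic on ℝ^d \ {0}; that is, its Laplacian Δg(x) = Σ_{k=1}^d ∂²g/∂x_k²(x) satisfies Δg(x) ≤ 0 for every x ≠ 0. -/

import Mathlib

open Set

/-- For `d ≥ 4` and `s : [0,∞) → [0,∞)` twice differentiable, nonnegative
and concave, the function `x ↦ s(‖x‖²)/‖x‖²` is superharmonic away from the origin:
its Laplacian `Σ_k ∂²g/∂x_k²` is `≤ 0` at every `x ≠ 0`. -/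
theorem stmt5 (d : ℕ) (hd : 4 ≤ d)
    (s : ℝ → ℝ)
    (hs_diff : DifferentiableOn ℝ s (Ici 0))
    (hs'_diff : DifferentiableOn ℝ (derivWithin s (Ici 0)) (Ici 0))
    (hs_nonneg : ∀ t, 0 ≤ t → 0 ≤ s t)
    (hs_concave : ConcaveOn ℝ (Ici 0) s) :
    ∀ x : EuclideanSpace ℝ (Fin d), x ≠ 0 →
      (∑ k : Fin d,
        fderiv ℝ (fun y : EuclideanSpace ℝ (Fin d) =>
            fderiv ℝ (fun z : EuclideanSpace ℝ (Fin d) => s (‖z‖ ^ 2) / ‖z‖ ^ 2) y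
              (EuclideanSpace.single k (1 : ℝ))) x
          (EuclideanSpace.single k (1 : ℝ))) ≤ 0 := by
  intro x hx
  -- differentiability of s at positive points
  have hsd : ∀ u : ℝ, 0 < u → DifferentiableAt ℝ s u := fun u hu =>
    (hs_diff u hu.le).differentiableAt (Ici_mem_nhds hu)
  -- derivWithin agrees with deriv on positive points
  have hdw : ∀ u : ℝ, 0 < u → derivWithin s (Ici 0) u = deriv s u := fun u hu =>
    derivWithin_of_mem_nhds (Ici_mem_nhds hu)
  -- deriv s is differentiable at positive points
  have hsd' : ∀ u : ℝ, 0 < u → DifferentiableAt ℝ (deriv s) u := by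
    intro u hu
    have h1 : DifferentiableAt ℝ (derivWithin s (Ici 0)) u :=
      (hs'_diff u hu.le).differentiableAt (Ici_mem_nhds hu)
    have h2 : derivWithin s (Ici 0) =ᶠ[nhds u] deriv s := by
      filter_upwards [Ioi_mem_nhds hu] with v hv
      exact hdw v hv
    exact h2.differentiableAt_iff.mp h1
  set t : ℝ := ‖x‖ ^ 2 with htdef
  have hxn : ‖x‖ ≠ 0 := norm_ne_zero_iff.mpr hx
  have ht : 0 < t := by positivity
  set a : ℝ := deriv s t with hadef
  set b : ℝ := deriv (deriv s) t with hbdef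
  -- b ≤ 0 : second derivative nonpositive by concavity
  have hanti : AntitoneOn (deriv s) (Ioi (0:ℝ)) := by
    intro u hu v hv huv
    have := hs_concave.antitoneOn_derivWithin hs_diff (mem_Ici.mpr (le_of_lt (mem_Ioi.mp hu)))
      (mem_Ici.mpr (le_of_lt (mem_Ioi.mp hv))) huv
    rwa [hdw u hu, hdw v hv] at this
  have hb : b ≤ 0 := by
    have hder : HasDerivAt (deriv s) b t := (hsd' t ht).hasDerivAt
    have htend := hasDerivAt_iff_tendsto_slope.mp hder
    have htend2 : Filter.Tendsto (slope (deriv s) t) (nhdsWithin t (Ioi t)) (nhds b) :=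
      htend.mono_left (nhdsWithin_mono t fun v hv => ne_of_gt hv)
    refine le_of_tendsto htend2 ?_
    filter_upwards [Ioo_mem_nhdsGT (lt_add_one t)] with v hv
    have hv1 : t < v := hv.1
    have : deriv s v ≤ deriv s t := hanti ht (ht.trans hv1) hv1.le
    rw [slope_def_field]
    have : deriv s v - deriv s t ≤ 0 := by linarith
    exact div_nonpos_iff.mpr (Or.inr ⟨this, by linarith⟩)
  -- a * t ≤ s t by concavity and s 0 ≥ 0
  have hA : a * t - s t ≤ 0 := by
    have hslope := hs_concave.deriv_le_slope (self_mem_Ici) (le_of_lt ht) ht (hsd t ht)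
    rw [slope_def_field] at hslope
    have h0 : 0 ≤ s 0 := hs_nonneg 0 le_rfl
    have : a ≤ (s t - s 0) / (t - 0) := hslope
    rw [sub_zero] at this
    have := (le_div_iff₀ ht).mp this
    linarith
  -- one-variable function and derivatives
  set f1 : ℝ → ℝ := fun u => (deriv s u * u - s u * 1) / u ^ 2 with hf1def
  have hF : ∀ u : ℝ, 0 < u → HasDerivAt (fun v => s v / v) (f1 u) u := fun u hu =>
    (hsd u hu).hasDerivAt.div (hasDerivAt_id u) hu.ne'
  have hnum : HasDerivAt (fun u => deriv s u * u - s u * 1)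
      (b * t + a * 1 - a * 1) t :=
    ((hsd' t ht).hasDerivAt.mul (hasDerivAt_id t)).sub ((hsd t ht).hasDerivAt.mul_const 1)
  have hden : HasDerivAt (fun u : ℝ => u ^ 2) (2 * t) t := by
    simpa using hasDerivAt_pow 2 t
  set C : ℝ := ((b * t + a * 1 - a * 1) * t ^ 2 - (a * t - s t * 1) * (2 * t)) / (t ^ 2) ^ 2
    with hCdef
  have hf1' : HasDerivAt f1 C t := hnum.div hden (by positivity)
  have hNx : HasFDerivAt (fun z : EuclideanSpace ℝ (Fin d) => ‖z‖ ^ 2)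
      (2 • (innerSL ℝ x)) x := (hasStrictFDerivAt_norm_sq x).hasFDerivAt
  have hterm : ∀ k : Fin d,
      fderiv ℝ (fun y : EuclideanSpace ℝ (Fin d) =>
          fderiv ℝ (fun z : EuclideanSpace ℝ (Fin d) => s (‖z‖ ^ 2) / ‖z‖ ^ 2) y
            (EuclideanSpace.single k (1 : ℝ))) x (EuclideanSpace.single k (1 : ℝ))
        = f1 t * 2 + 4 * C * (x k) ^ 2 := by
    intro k
    have hev : (fun y : EuclideanSpace ℝ (Fin d) =>
        fderiv ℝ (fun z : EuclideanSpace ℝ (Fin d) => s (‖z‖ ^ 2) / ‖z‖ ^ 2) y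
          (EuclideanSpace.single k (1 : ℝ)))
        =ᶠ[nhds x] (fun y => f1 (‖y‖ ^ 2) * (2 * y k)) := by
      filter_upwards [isOpen_compl_singleton.mem_nhds hx] with y hy
      have hy0 : y ≠ 0 := hy
      have hyn0 : ‖y‖ ≠ 0 := norm_ne_zero_iff.mpr hy0
      have hyn : (0:ℝ) < ‖y‖ ^ 2 := by positivity
      have hNy : HasFDerivAt (fun z : EuclideanSpace ℝ (Fin d) => ‖z‖ ^ 2)
          (2 • (innerSL ℝ y)) y := (hasStrictFDerivAt_norm_sq y).hasFDerivAt
      have hG : HasFDerivAt (fun z : EuclideanSpace ℝ (Fin d) => s (‖z‖ ^ 2) / ‖z‖ ^ 2)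
          (f1 (‖y‖ ^ 2) • (2 • (innerSL ℝ y))) y :=
        by have := (hF _ hyn).comp_hasFDerivAt y hNy; exact this
      rw [hG.fderiv]
      simp [EuclideanSpace.inner_single_right]
      try ring
    rw [hev.fderiv_eq]
    have hproj : HasFDerivAt (fun y : EuclideanSpace ℝ (Fin d) => 2 * y k)
        ((2:ℝ) • (EuclideanSpace.proj k : EuclideanSpace ℝ (Fin d) →L[ℝ] ℝ)) x :=
      (EuclideanSpace.proj (𝕜 := ℝ) k).hasFDerivAt.const_mul 2
    have hcomp : HasFDerivAt (fun y : EuclideanSpace ℝ (Fin d) => f1 (‖y‖ ^ 2))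
        (C • (2 • (innerSL ℝ x))) x := by
      have := hf1'.comp_hasFDerivAt (x := x) hNx
      exact this
    have hH := hcomp.mul hproj
    rw [show (fun y : EuclideanSpace ℝ (Fin d) => f1 (‖y‖ ^ 2) * (2 * y k)) =
      ((fun y : EuclideanSpace ℝ (Fin d) => f1 (‖y‖ ^ 2)) * fun y => 2 * y k) from rfl, hH.fderiv]
    simp [EuclideanSpace.inner_single_right]
    try ring
  have hsum : ∑ k : Fin d, (x k) ^ 2 = t := by
    rw [htdef, EuclideanSpace.norm_eq, Real.sq_sqrt (by positivity)]
    simp [Real.norm_eq_abs, sq_abs]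
  calc (∑ k : Fin d,
        fderiv ℝ (fun y : EuclideanSpace ℝ (Fin d) =>
            fderiv ℝ (fun z : EuclideanSpace ℝ (Fin d) => s (‖z‖ ^ 2) / ‖z‖ ^ 2) y
              (EuclideanSpace.single k (1 : ℝ))) x
          (EuclideanSpace.single k (1 : ℝ)))
      = ∑ k : Fin d, (f1 t * 2 + 4 * C * (x k) ^ 2) :=
        Finset.sum_congr rfl fun k _ => hterm k
    _ = (d : ℝ) * (f1 t * 2) + 4 * C * t := by
        rw [Finset.sum_add_distrib, Finset.sum_const, Finset.card_univ, Fintype.card_fin,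
          ← Finset.mul_sum, hsum]
        simp [nsmul_eq_mul]
    _ ≤ 0 := by
        have hf1t : f1 t = (a * t - s t) / t ^ 2 := by
          rw [hf1def]; simp [← hadef]
        have hAd : (a * t - s t) / t ^ 2 ≤ 0 :=
          div_nonpos_iff.mpr (Or.inr ⟨hA, by positivity⟩)
        have hdr : (4 : ℝ) ≤ (d : ℝ) := by exact_mod_cast hd
        have hkey : (d : ℝ) * (f1 t * 2) + 4 * C * t
            = 4 * b + (2 * (d:ℝ) - 8) * ((a * t - s t) / t ^ 2) := by
          rw [hf1t, hCdef]
          field_simp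
          ring
        rw [hkey]
        nlinarith [mul_nonpos_of_nonneg_of_nonpos
          (by linarith : (0:ℝ) ≤ 2*(d:ℝ) - 8) hAd]
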